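/- For every p₀ ∈ E with 0 < ‖p₀‖ < 1, the limit lim_{δ→0⁺} μ(B(p₀, δ))/(π·δ²) exists and equals τ({X ∈ Y : ∃ ζ ∈ ℂ, p₀ = ζ • v X}), the τ-mass of the set of disk directions whose complex line passes through p₀. In particular, if the 2-density of the cone measure μ at a non-vertex point p₀ is at least κ > 0, then τ({X : ∃ ζ ∈ ℂ, p₀ = ζ • v X}) ≥ κ. (The key step concluding the proof of Proposition 3.1: a point of density ≥ κ on a positive (1,1)-cone forces the weighting measure τ to carry mass ≥ κ on the disk through that point.) -/

import Mathlib

open Metric MeasureTheory Filter Real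

noncomputable instance (n : ℕ) : MeasurableSpace (EuclideanSpace ℂ (Fin n)) :=
  WithLp.measurableSpace 2 (Fin n → ℂ)

instance (n : ℕ) : BorelSpace (EuclideanSpace ℂ (Fin n)) :=
  PiLp.borelSpace 2

/-- The measure-theoretic model of a positive (1,1)-cone (formula (2) of the
paper): the family of `J₀`-holomorphic unit disks through `0` with directions
`v X`, weighted by the positive measure `τ`; concretely, the pushforward of
`τ ⊗ (Lebesgue on the unit disk of ℂ)` under `(X, ζ) ↦ ζ • v X`. -/
noncomputable def coneMeasure {n : ℕ} {Y : Type*} [MeasurableSpace Y]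
    (τ : Measure Y) (v : Y → EuclideanSpace ℂ (Fin (n + 1))) :
    Measure (EuclideanSpace ℂ (Fin (n + 1))) :=
  Measure.map (fun p : Y × ℂ => p.2 • v p.1)
    (τ.prod ((volume : Measure ℂ).restrict (ball 0 1)))

set_option maxHeartbeats 1000000 in
/-- **Density of a positive (1,1)-cone at a non-vertex point (key step in the
proof of Proposition 3.1).**  At every `p₀` with `0 < ‖p₀‖ < 1`, the 2-density
`lim_{δ→0⁺} μ(B(p₀,δ))/(π δ²)` of the cone measure exists and equals the
`τ`-mass of the set of disk directions whose complex line passes through `p₀`.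
In particular, if the density at `p₀` is at least `κ > 0`, then
`τ({X : ∃ ζ, p₀ = ζ • v X}) ≥ κ`. -/
theorem coneMeasure_density_at_nonvertex
    (n : ℕ) (Y : Type*) [MeasurableSpace Y]
    (τ : Measure Y) [IsFiniteMeasure τ]
    (v : Y → EuclideanSpace ℂ (Fin (n + 1))) (hv : Measurable v)
    (hv1 : ∀ X, ‖v X‖ = 1)
    (p₀ : EuclideanSpace ℂ (Fin (n + 1))) (hp₀ : 0 < ‖p₀‖) (hp₁ : ‖p₀‖ < 1) :
    Tendsto (fun δ : ℝ => (coneMeasure τ v (ball p₀ δ)).toReal / (π * δ ^ 2))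
      (nhdsWithin 0 (Set.Ioi 0))
      (nhds (τ {X | ∃ ζ : ℂ, p₀ = ζ • v X}).toReal) ∧
    ∀ κ : ℝ, 0 < κ →
      κ ≤ liminf (fun δ : ℝ =>
            (coneMeasure τ v (ball p₀ δ)).toReal / (π * δ ^ 2))
          (nhdsWithin 0 (Set.Ioi 0)) →
      κ ≤ (τ {X | ∃ ζ : ℂ, p₀ = ζ • v X}).toReal := by
  classical
  set ν : Measure ℂ := (volume : Measure ℂ).restrict (ball 0 1) with hνdef
  set a : Y → ℂ := fun X => (inner ℂ (v X) p₀ : ℂ) with hadef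
  set w : Y → EuclideanSpace ℂ (Fin (n + 1)) := fun X => p₀ - a X • v X with hwdef
  set S : Set Y := {X | ∃ ζ : ℂ, p₀ = ζ • v X} with hSdef
  -- the pushforward map is measurable
  have hsmul : Measurable (fun p : Y × ℂ => p.2 • v p.1) := by
    have h1 : Measurable (fun p : Y × ℂ => (p.2, v p.1)) :=
      measurable_snd.prodMk (hv.comp measurable_fst)
    exact (continuous_smul.measurable).comp h1
  -- measurability of a
  have ha : Measurable a := by
    have hc : Continuous (fun u : EuclideanSpace ℂ (Fin (n + 1)) => (inner ℂ u p₀ : ℂ)) :=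
      continuous_id.inner continuous_const
    exact hc.measurable.comp hv
  -- the Pythagoras identity
  have key : ∀ X (ζ : ℂ), ‖ζ • v X - p₀‖ ^ 2 = ‖ζ - a X‖ ^ 2 + ‖w X‖ ^ 2 := by
    intro X ζ
    have hu := hv1 X
    have hvv : (inner ℂ (v X) (v X) : ℂ) = 1 := by
      rw [inner_self_eq_norm_sq_to_K, hu]; norm_num
    have hw : (inner ℂ (v X) (w X) : ℂ) = 0 := by
      simp only [hwdef]
      rw [inner_sub_right, inner_smul_right, hvv, mul_one, sub_self]
    have hortho : (inner ℂ ((ζ - a X) • v X) (-(w X)) : ℂ) = 0 := by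
      rw [inner_neg_right, inner_smul_left, hw]; ring
    have hrw : ζ • v X - p₀ = (ζ - a X) • v X + -(w X) := by
      simp only [hwdef]; module
    have hpy := norm_add_sq_eq_norm_sq_add_norm_sq_of_inner_eq_zero _ _ hortho
    rw [norm_neg] at hpy
    have h2 : ‖(ζ - a X) • v X‖ = ‖ζ - a X‖ := by rw [norm_smul, hu, mul_one]
    rw [hrw]
    simp only [pow_two]
    rw [hpy, h2]
  -- membership characterization
  have mem_iff : ∀ X (ζ : ℂ) (δ : ℝ), 0 < δ →
      (ζ • v X ∈ ball p₀ δ ↔ ‖ζ - a X‖ ^ 2 + ‖w X‖ ^ 2 < δ ^ 2) := by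
    intro X ζ δ hδ
    rw [mem_ball, dist_eq_norm]
    constructor
    · intro h
      rw [← key]
      nlinarith [norm_nonneg (ζ • v X - p₀)]
    · intro h
      have h2 : ‖ζ • v X - p₀‖ ^ 2 < δ ^ 2 := by rw [key X ζ]; exact h
      nlinarith [norm_nonneg (ζ • v X - p₀), hδ]
  -- the slice sets
  set s : Y → ℝ → Set ℂ := fun X δ => {ζ : ℂ | ζ • v X ∈ ball p₀ δ} with hsdef
  have hsm : ∀ X δ, MeasurableSet (s X δ) := by
    intro X δ
    have : Continuous (fun ζ : ℂ => ζ • v X) := continuous_id.smul continuous_const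
    exact this.measurable measurableSet_ball
  have hsub : ∀ X (δ : ℝ), 0 < δ → s X δ ⊆ ball (a X) δ := by
    intro X δ hδ ζ hζ
    have h := (mem_iff X ζ δ hδ).1 hζ
    rw [mem_ball, dist_eq_norm]
    have h2 : ‖ζ - a X‖ ^ 2 < δ ^ 2 := by nlinarith [sq_nonneg ‖w X‖]
    exact lt_of_pow_lt_pow_left₀ 2 hδ.le h2
  -- empty slice when δ < ‖w X‖
  have hempty : ∀ X (δ : ℝ), 0 < δ → δ ≤ ‖w X‖ → s X δ = ∅ := by
    intro X δ hδ hδw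
    ext ζ
    simp only [hsdef, Set.mem_setOf_eq, Set.mem_empty_iff_false, iff_false]
    intro hζ
    have h := (mem_iff X ζ δ hδ).1 hζ
    nlinarith [sq_nonneg ‖ζ - a X‖]
  -- full slice when w X = 0
  have hfull : ∀ X (δ : ℝ), 0 < δ → δ ≤ 1 - ‖p₀‖ → w X = 0 →
      s X δ ∩ ball 0 1 = ball (a X) δ := by
    intro X δ hδ hδ1 hwX
    have hap : ‖a X‖ = ‖p₀‖ := by
      have h0 : p₀ = a X • v X := by
        have h1 := hwX
        simp only [hwdef] at h1
        exact eq_of_sub_eq_zero h1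
      rw [h0, norm_smul, hv1 X, mul_one]
    apply Set.eq_of_subset_of_subset
    · exact fun ζ hζ => hsub X δ hδ hζ.1
    · intro ζ hζ
      rw [mem_ball, dist_eq_norm] at hζ
      constructor
      · refine (mem_iff X ζ δ hδ).2 ?_
        rw [hwX, norm_zero]
        nlinarith [norm_nonneg (ζ - a X)]
      · rw [mem_ball, dist_eq_norm, sub_zero]
        calc ‖ζ‖ ≤ ‖ζ - a X‖ + ‖a X‖ := by
              simpa using norm_add_le (ζ - a X) (a X)
          _ < δ + ‖p₀‖ := by rw [hap]; linarith
          _ ≤ 1 := by linarith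
  -- w X = 0 iff X ∈ S
  have hwS : ∀ X, X ∈ S ↔ w X = 0 := by
    intro X
    constructor
    · rintro ⟨ζ, hζ⟩
      have haX : a X = ζ := by
        simp only [hadef, hζ, inner_smul_right]
        have hvv : (inner ℂ (v X) (v X) : ℂ) = 1 := by
          rw [inner_self_eq_norm_sq_to_K, hv1 X]; norm_num
        rw [hvv, mul_one]
      simp only [hwdef, haX, ← hζ, sub_self]
    · intro hwX
      refine ⟨a X, ?_⟩
      simp only [hwdef] at hwX
      exact eq_of_sub_eq_zero hwX
  -- S is measurable
  have hS : MeasurableSet S := by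
    have hf : Measurable (fun X => a X • v X - p₀) := by
      have h1 : Measurable (fun X => (a X, v X)) := ha.prodMk hv
      exact ((continuous_smul.measurable).comp h1).sub_const p₀
    have : S = (fun X => a X • v X - p₀) ⁻¹' {0} := by
      ext X
      simp only [Set.mem_preimage, Set.mem_singleton_iff, sub_eq_zero]
      rw [hwS X]
      simp only [hwdef, sub_eq_zero]
      exact ⟨fun h => h.symm, fun h => h.symm⟩
    rw [this]
    exact hf (measurableSet_singleton 0)
  -- ν is finite
  have hν_fin : IsFiniteMeasure ν := by
    constructor
    rw [hνdef, Measure.restrict_apply_univ]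
    simp [Complex.volume_ball]
  -- volume of complex balls, toReal
  have hvol : ∀ (c : ℂ) (δ : ℝ), 0 ≤ δ → (volume (ball c δ)).toReal = π * δ ^ 2 := by
    intro c δ hδ
    rw [Complex.volume_ball]
    rw [ENNReal.toReal_mul, ENNReal.toReal_pow, ENNReal.toReal_ofReal hδ]
    rw [ENNReal.coe_toReal, NNReal.coe_real_pi]
    ring
  -- the cone measure of a ball as an integral of slice measures
  have hcone : ∀ δ : ℝ, coneMeasure τ v (ball p₀ δ) = ∫⁻ X, ν (s X δ) ∂τ := by
    intro δ
    rw [coneMeasure, Measure.map_apply hsmul measurableSet_ball,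
      Measure.prod_apply (hsmul measurableSet_ball)]
    rfl
  -- F and its properties
  set F : ℝ → Y → ℝ := fun δ X => (ν (s X δ)).toReal / (π * δ ^ 2) with hFdef
  have hmeas_prod : ∀ δ : ℝ, Measurable (fun X => ν (s X δ)) := by
    intro δ
    exact measurable_measure_prodMk_left (hsmul measurableSet_ball)
  have hint_eq : ∀ δ : ℝ, 0 < δ →
      (coneMeasure τ v (ball p₀ δ)).toReal / (π * δ ^ 2) = ∫ X, F δ X ∂τ := by
    intro δ hδ
    rw [hcone δ]
    have h1 : ∫ X, F δ X ∂τ = (∫ X, (ν (s X δ)).toReal ∂τ) / (π * δ ^ 2) := by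
      simp only [hFdef]
      rw [integral_div]
    rw [h1]
    congr 1
    rw [integral_toReal (hmeas_prod δ).aemeasurable]
    exact Eventually.of_forall fun X => measure_lt_top ν _
  -- bound for F
  have hF_bound : ∀ δ : ℝ, 0 < δ → ∀ X, ‖F δ X‖ ≤ 1 := by
    intro δ hδ X
    have h0 : (0:ℝ) ≤ F δ X := by
      apply div_nonneg ENNReal.toReal_nonneg
      positivity
    rw [Real.norm_of_nonneg h0]
    have hle : ν (s X δ) ≤ volume (ball (a X) δ) :=
      le_trans (measure_mono (hsub X δ hδ)) (Measure.restrict_le_self _)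
    have hle2 : (ν (s X δ)).toReal ≤ π * δ ^ 2 := by
      have := ENNReal.toReal_mono (by
        rw [Complex.volume_ball]
        exact ENNReal.mul_ne_top (by simp [ENNReal.pow_ne_top]) ENNReal.coe_ne_top) hle
      rwa [hvol (a X) δ hδ.le] at this
    rw [div_le_one (by positivity)]
    exact hle2
  -- pointwise limit of F
  have hF_lim : ∀ X, Tendsto (fun δ => F δ X) (nhdsWithin 0 (Set.Ioi 0))
      (nhds (S.indicator (fun _ => (1:ℝ)) X)) := by
    intro X
    by_cases hXS : X ∈ S
    · have hwX : w X = 0 := (hwS X).1 hXS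
      have hval : S.indicator (fun _ => (1:ℝ)) X = 1 := Set.indicator_of_mem hXS 1
      rw [hval]
      have hev : ∀ᶠ δ in nhdsWithin 0 (Set.Ioi 0), F δ X = 1 := by
        have hmem : Set.Ioo (0:ℝ) (1 - ‖p₀‖) ∈ nhdsWithin 0 (Set.Ioi 0) :=
          Ioo_mem_nhdsGT_of_mem ⟨le_refl 0, by linarith⟩
        filter_upwards [hmem] with δ hδ
        obtain ⟨hδ0, hδ1⟩ := hδ
        have : ν (s X δ) = volume (ball (a X) δ) := by
          rw [hνdef, Measure.restrict_apply (hsm X δ), hfull X δ hδ0 (by linarith) hwX]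
        simp only [hFdef]
        rw [this, hvol (a X) δ hδ0.le]
        exact div_self (by positivity)
      have hev' : (fun δ => F δ X) =ᶠ[nhdsWithin (0:ℝ) (Set.Ioi 0)] fun _ => (1:ℝ) := hev
      exact Tendsto.congr' hev'.symm tendsto_const_nhds
    · have hwX : w X ≠ 0 := fun h => hXS ((hwS X).2 h)
      have hwpos : 0 < ‖w X‖ := norm_pos_iff.2 hwX
      have hval : S.indicator (fun _ => (1:ℝ)) X = 0 := Set.indicator_of_notMem hXS 1
      rw [hval]
      have hev : ∀ᶠ δ in nhdsWithin 0 (Set.Ioi 0), F δ X = 0 := by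
        have hmem : Set.Ioo (0:ℝ) ‖w X‖ ∈ nhdsWithin 0 (Set.Ioi 0) :=
          Ioo_mem_nhdsGT_of_mem ⟨le_refl 0, hwpos⟩
        filter_upwards [hmem] with δ hδ
        obtain ⟨hδ0, hδ1⟩ := hδ
        simp only [hFdef]
        rw [hempty X δ hδ0 hδ1.le]
        simp
      have hev' : (fun δ => F δ X) =ᶠ[nhdsWithin (0:ℝ) (Set.Ioi 0)] fun _ => (0:ℝ) := hev
      exact Tendsto.congr' hev'.symm tendsto_const_nhds
  -- dominated convergence
  have hmain : Tendsto (fun δ : ℝ => ∫ X, F δ X ∂τ) (nhdsWithin 0 (Set.Ioi 0))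
      (nhds (τ S).toReal) := by
    have hDCT := MeasureTheory.tendsto_integral_filter_of_dominated_convergence
      (μ := τ) (l := nhdsWithin (0:ℝ) (Set.Ioi 0)) (F := F)
      (f := S.indicator (fun _ => (1:ℝ))) (bound := fun _ => (1:ℝ))
      (Eventually.of_forall fun δ =>
        ((hmeas_prod δ).ennreal_toReal.div_const _).aestronglyMeasurable)
      (by
        filter_upwards [self_mem_nhdsWithin] with δ hδ
        exact Eventually.of_forall (hF_bound δ hδ))
      (integrable_const 1)
      (Eventually.of_forall hF_lim)
    have heq : ∫ x, S.indicator (fun _ => (1:ℝ)) x ∂τ = (τ S).toReal := by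
      rw [integral_indicator_const (1:ℝ) hS]; simp [measureReal_def]
    rwa [heq] at hDCT
  have htend : Tendsto (fun δ : ℝ => (coneMeasure τ v (ball p₀ δ)).toReal / (π * δ ^ 2))
      (nhdsWithin 0 (Set.Ioi 0)) (nhds (τ S).toReal) := by
    apply Tendsto.congr' _ hmain
    filter_upwards [self_mem_nhdsWithin] with δ hδ
    exact (hint_eq δ hδ).symm
  refine ⟨htend, fun κ hκ hle => ?_⟩
  rwa [htend.liminf_eq] at hle
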